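/- Let (y_n) be a real sequence with |y_n| ≤ 1 for all n and whose Cesàro averages tend to 0 (i.e., (1/n)∑_{i=1}^n y_i → 0). Then for every ε ∈ (0,1) and every natural number m ≥ 1 there exists L₀ such that for every L ≥ L₀ and every interval I ⊆ [1, mL] of integers with |I| ≥ L, the absolute value of the average of y over I is less than ε. -/

import Mathlib

open Finset

theorem stmt0 (y : ℕ → ℝ) (hbd : ∀ n, |y n| ≤ 1)
    (hzero : Filter.Tendsto (fun n : ℕ => (∑ i ∈ Finset.Icc 1 n, y i) / n)
      Filter.atTop (nhds 0)) :
    ∀ ε : ℝ, 0 < ε → ε < 1 → ∀ m : ℕ, 1 ≤ m →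
      ∃ L₀ : ℕ, ∀ L : ℕ, L₀ ≤ L → ∀ a b : ℕ, 1 ≤ a → a ≤ b → b ≤ m * L →
        L ≤ b + 1 - a →
        |(∑ i ∈ Finset.Icc a b, y i) / (b + 1 - a : ℕ)| < ε := by
  intro ε hε hε1 m hm
  set S : ℕ → ℝ := fun k => ∑ i ∈ Finset.Icc 1 k, y i with hSdef
  have hmR : (1:ℝ) ≤ m := by exact_mod_cast hm
  have hS : ∀ k, |S k| ≤ k := by
    intro k
    calc |S k| ≤ ∑ i ∈ Finset.Icc 1 k, |y i| := Finset.abs_sum_le_sum_abs _ _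
    _ ≤ ∑ i ∈ Finset.Icc 1 k, 1 := Finset.sum_le_sum fun i _ => hbd i
    _ = k := by simp
  have hδ : (0:ℝ) < ε / (4 * m) := by positivity
  rw [Metric.tendsto_atTop] at hzero
  obtain ⟨N, hN⟩ := hzero (ε / (4 * m)) hδ
  have hbound : ∀ k : ℕ, |S k| ≤ ε / (4 * m) * k + N := by
    intro k
    rcases le_or_gt (max N 1) k with hk | hk
    · have hk1 : (1:ℕ) ≤ k := le_trans (le_max_right _ _) hk
      have h := hN k (le_trans (le_max_left _ _) hk)
      rw [Real.dist_eq, sub_zero, abs_div,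
        abs_of_nonneg (by positivity : (0:ℝ) ≤ (k:ℝ))] at h
      have hkpos : (0:ℝ) < k := by exact_mod_cast hk1
      have h2 : |S k| < ε / (4 * m) * k := by
        rw [div_lt_iff₀ hkpos] at h
        linarith
      have hN0 : (0:ℝ) ≤ N := Nat.cast_nonneg N
      linarith
    · have hkN : k ≤ N := by omega
      have h1 : (k:ℝ) ≤ N := by exact_mod_cast hkN
      have h2 : (0:ℝ) ≤ ε / (4 * m) * k := by positivity
      linarith [hS k]
  refine ⟨⌈4 * (N:ℝ) / ε⌉₊ + 1, ?_⟩
  intro L hL a b ha hab hbm hlen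
  have hL1 : 1 ≤ L := by omega
  have hLpos : (0:ℝ) < L := by exact_mod_cast hL1
  have hLbig : 4 * (N:ℝ) / ε < L := by
    have h := Nat.lt_of_ceil_lt (lt_of_lt_of_le (Nat.lt_succ_self _) hL)
    exact h
  have h4N : 4 * (N:ℝ) < ε * L := by
    rw [div_lt_iff₀ hε] at hLbig; linarith
  -- split the sum
  have hsplit : ∑ i ∈ Finset.Icc a b, y i = S b - S (a - 1) := by
    have h1 : Finset.Icc a b = Finset.Ioc (a-1) b := by
      rw [← Finset.Icc_add_one_left_eq_Ioc]
      congr 1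
      omega
    have h2 : ∀ k, S k = ∑ i ∈ Finset.Ioc 0 k, y i := by
      intro k; rw [hSdef]; rw [← Finset.Icc_add_one_left_eq_Ioc]; rfl
    have h3 := Finset.sum_Ioc_consecutive y (Nat.zero_le (a-1)) (by omega : a - 1 ≤ b)
    rw [h1, h2, h2]
    linarith [h3]
  -- main bound
  have hb1 : ((b:ℝ)) ≤ m * L := by exact_mod_cast hbm
  have ha1 : ((a-1:ℕ):ℝ) ≤ m * L := by
    have : (a-1:ℕ) ≤ m * L := by omega
    exact_mod_cast this
  have hsum : |∑ i ∈ Finset.Icc a b, y i| ≤ ε / (4 * m) * (2 * m * L) + 2 * N := by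
    rw [hsplit]
    have h1 := hbound b
    have h2 := hbound (a-1)
    have h3 : |S b - S (a-1)| ≤ |S b| + |S (a-1)| := abs_sub _ _
    have h4 : ε / (4 * m) * (b:ℝ) + ε / (4 * m) * ((a-1:ℕ):ℝ) ≤ ε / (4 * m) * (2 * m * L) := by
      have := hδ.le
      nlinarith
    linarith
  have hkey : ε / (4 * m) * (2 * m * L) = ε * L / 2 := by
    field_simp
    ring
  have hlenc : ((b + 1 - a : ℕ):ℝ) = (b:ℝ) + 1 - a := by
    have : a ≤ b + 1 := by omega
    push_cast [this]
    ring
  have hlenR : (L:ℝ) ≤ ((b + 1 - a : ℕ):ℝ) := by exact_mod_cast hlen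
  have hlenpos : (0:ℝ) < ((b + 1 - a : ℕ):ℝ) := lt_of_lt_of_le hLpos hlenR
  rw [abs_div, abs_of_pos hlenpos, div_lt_iff₀ hlenpos]
  have hεlen : ε * L ≤ ε * ((b + 1 - a : ℕ):ℝ) := by
    exact mul_le_mul_of_nonneg_left hlenR hε.le
  calc |∑ i ∈ Finset.Icc a b, y i| ≤ ε * L / 2 + 2 * N := by rw [hkey] at hsum; linarith
  _ < ε * L := by linarith
  _ ≤ ε * ((b + 1 - a : ℕ):ℝ) := hεlen
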